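/- Let b be a prime, m = ℓd + r with ℓ ∈ ℕ₀ and 0 ≤ r < d, and let V = {v_1,…,v_m} be a linearly independent set in (ℤ_b)^m. If every row of each of the generator matrices C^(1),…,C^(d) ∈ (ℤ_b)^{m×m} belongs to V, then the quality criterion satisfies ρ(𝒞) ≤ 2⌊m/d⌋ + 1. -/

import Mathlib

open Classical in
/-- The quality criterion `ρ(𝒞)` of a collection of generator matrices: the greatest
`ρ ∈ {0,…,m}` such that for every `m⃗ = (m_1,…,m_d)` with `∑_j m_j = ρ`, the matrix
obtained by stacking the first `m_j` rows of each `C^(j)` has rank `ρ` over `ℤ_b`. -/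
noncomputable def rhoC (b d m : ℕ) (C : Fin d → Matrix (Fin m) (Fin m) (ZMod b)) : ℕ :=
  Nat.findGreatest (fun ρ =>
    ∀ mv : Fin d → Fin (m + 1), (∑ j, (mv j : ℕ)) = ρ →
      (Matrix.of fun (p : (j : Fin d) × Fin ((mv j : ℕ))) (s : Fin m) =>
        C p.1 (Fin.castLE (Fin.is_le (mv p.1)) p.2) s).rank = ρ) m

/-- A matrix with two equal rows has rank strictly less than the number of rows. -/
lemma rank_lt_of_rows_eq {R : Type*} [Field R] {ι n : Type*} [Fintype ι] [Fintype n]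
    (M : Matrix ι n R) {p q : ι} (hpq : p ≠ q) (h : M p = M q) :
    M.rank < Fintype.card ι := by
  classical
  have hrange : Set.range M = Set.range (fun x : {x : ι // x ≠ p} => M x.1) := by
    ext w
    constructor
    · rintro ⟨x, rfl⟩
      by_cases hx : x = p
      · exact ⟨⟨q, Ne.symm hpq⟩, by rw [hx, h]⟩
      · exact ⟨⟨x, hx⟩, rfl⟩
    · rintro ⟨x, rfl⟩; exact ⟨x.1, rfl⟩
  rw [Matrix.rank_eq_finrank_span_row, show M.row = M from rfl, hrange]
  calc Module.finrank R (Submodule.span R (Set.range fun x : {x : ι // x ≠ p} => M x.1))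
      ≤ Fintype.card {x : ι // x ≠ p} := finrank_range_le_card _
    _ < Fintype.card ι := Fintype.card_subtype_lt (x := p) (by simp)

/-- If all rows of the generator matrices `C^(1),…,C^(d)` come from a set of `m` linearly
independent vectors in `ℤ_b^m`, where `m = ℓd + r` with `0 ≤ r < d`, then the quality
criterion satisfies `ρ(𝒞) ≤ 2⌊m/d⌋ + 1`. -/
theorem stmt15 (b d m ℓ r : ℕ) [Fact (Nat.Prime b)]
    (hm : m = ℓ * d + r) (hr : r < d)
    (v : Fin m → Fin m → ZMod b) (hv : LinearIndependent (ZMod b) v)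
    (C : Fin d → Matrix (Fin m) (Fin m) (ZMod b))
    (hrows : ∀ j k, ∃ l, C j k = v l) :
    rhoC b d m C ≤ 2 * (m / d) + 1 := by
  classical
  have hd : 0 < d := lt_of_le_of_lt (Nat.zero_le r) hr
  have hmd : m / d = ℓ := by
    subst hm
    rw [add_comm, Nat.add_mul_div_right _ _ hd, Nat.div_eq_of_lt hr, zero_add]
  rw [hmd]
  by_contra hcon
  push_neg at hcon
  set ρ := rhoC b d m C with hρdef
  have hρm : ρ ≤ m := Nat.findGreatest_le m
  have hρ : 2 * ℓ + 2 ≤ ρ := hcon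
  have hP : ∀ mv : Fin d → Fin (m + 1), (∑ j, (mv j : ℕ)) = ρ →
      (Matrix.of fun (p : (j : Fin d) × Fin ((mv j : ℕ))) (s : Fin m) =>
        C p.1 (Fin.castLE (Fin.is_le (mv p.1)) p.2) s).rank = ρ :=
    Nat.findGreatest_of_ne_zero hρdef.symm (by omega)
  have hℓm : ℓ + 1 ≤ m := by omega
  -- pigeonhole: among first ℓ+1 rows of all d matrices, two coincide
  have hcard : Fintype.card (Fin m) < Fintype.card (Fin d × Fin (ℓ + 1)) := by
    simp only [Fintype.card_prod, Fintype.card_fin]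
    have : m = ℓ * d + r := hm
    nlinarith
  set f : Fin d × Fin (ℓ + 1) → Fin m :=
    fun x => Classical.choose (hrows x.1 (Fin.castLE hℓm x.2)) with hf
  obtain ⟨x, y, hxy, hfxy⟩ := Fintype.exists_ne_map_eq_of_card_lt f hcard
  have hCxy : C x.1 (Fin.castLE hℓm x.2) = C y.1 (Fin.castLE hℓm y.2) := by
    rw [Classical.choose_spec (hrows x.1 (Fin.castLE hℓm x.2)),
        Classical.choose_spec (hrows y.1 (Fin.castLE hℓm y.2))]
    exact congrArg v hfxy
  by_cases hj : x.1 = y.1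
  · -- same matrix: take all ρ first rows from matrix x.1
    have hk : (x.2 : ℕ) ≠ (y.2 : ℕ) := by
      intro hk
      exact hxy (Prod.ext hj (Fin.ext hk))
    set mv : Fin d → Fin (m + 1) := fun j => if j = x.1 then ⟨ρ, by omega⟩ else 0 with hmv
    have hsum : (∑ j, (mv j : ℕ)) = ρ := by
      rw [hmv]
      simp only [apply_ite (Fin.val : Fin (m+1) → ℕ), Fin.val_zero]
      rw [Finset.sum_ite_eq' Finset.univ x.1 (fun _ => ρ)]
      simp
    have hmvx : (mv x.1 : ℕ) = ρ := by simp [hmv]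
    have hrank := hP mv hsum
    set M := (Matrix.of fun (p : (j : Fin d) × Fin ((mv j : ℕ))) (s : Fin m) =>
        C p.1 (Fin.castLE (Fin.is_le (mv p.1)) p.2) s) with hM
    have hcardS : Fintype.card ((j : Fin d) × Fin ((mv j : ℕ))) = ρ := by
      simp [Fintype.card_sigma, hsum]
    set p : (j : Fin d) × Fin ((mv j : ℕ)) := ⟨x.1, ⟨(x.2 : ℕ), by omega⟩⟩ with hp
    set q : (j : Fin d) × Fin ((mv j : ℕ)) := ⟨x.1, ⟨(y.2 : ℕ), by omega⟩⟩ with hq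
    have hpq : p ≠ q := by
      intro hpq
      rw [hp, hq] at hpq
      simp only [Sigma.mk.inj_iff, heq_eq_eq, Fin.mk.injEq, true_and] at hpq
      exact hk hpq
    have hrows_eq : M p = M q := by
      funext s
      show C x.1 (Fin.castLE _ ⟨(x.2 : ℕ), _⟩) s = C x.1 (Fin.castLE _ ⟨(y.2 : ℕ), _⟩) s
      have h1 : (Fin.castLE (Fin.is_le (mv x.1)) (⟨(x.2 : ℕ), by omega⟩ : Fin ((mv x.1 : ℕ))))
          = Fin.castLE hℓm x.2 := by apply Fin.ext; simp
      have h2 : (Fin.castLE (Fin.is_le (mv x.1)) (⟨(y.2 : ℕ), by omega⟩ : Fin ((mv x.1 : ℕ))))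
          = Fin.castLE hℓm y.2 := by apply Fin.ext; simp
      rw [h1, h2, hCxy, hj]
    have := rank_lt_of_rows_eq M hpq hrows_eq
    rw [hrank, hcardS] at this
    exact lt_irrefl _ this
  · -- distinct matrices
    set mv : Fin d → Fin (m + 1) := fun j =>
      if j = x.1 then ⟨ρ - (ℓ + 1), by omega⟩ else if j = y.1 then ⟨ℓ + 1, by omega⟩ else 0
      with hmv
    have hmvx : (mv x.1 : ℕ) = ρ - (ℓ + 1) := by simp [hmv]
    have hmvy : (mv y.1 : ℕ) = ℓ + 1 := by simp [hmv, Ne.symm hj]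
    have hsum : (∑ j, (mv j : ℕ)) = ρ := by
      have hsplit : ∀ j, (mv j : ℕ) =
          (if j = x.1 then ρ - (ℓ + 1) else 0) + (if j = y.1 then ℓ + 1 else 0) := by
        intro j
        rw [hmv]
        by_cases h1 : j = x.1
        · simp [h1, Ne.symm hj, hj]
        · by_cases h2 : j = y.1 <;> simp [h1, h2, Ne.symm hj, hj]
      rw [Finset.sum_congr rfl (fun j _ => hsplit j), Finset.sum_add_distrib,
          Finset.sum_ite_eq' Finset.univ x.1 (fun _ => ρ - (ℓ + 1)),
          Finset.sum_ite_eq' Finset.univ y.1 (fun _ => ℓ + 1)]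
      simp
      omega
    have hrank := hP mv hsum
    set M := (Matrix.of fun (p : (j : Fin d) × Fin ((mv j : ℕ))) (s : Fin m) =>
        C p.1 (Fin.castLE (Fin.is_le (mv p.1)) p.2) s) with hM
    have hcardS : Fintype.card ((j : Fin d) × Fin ((mv j : ℕ))) = ρ := by
      simp [Fintype.card_sigma, hsum]
    set p : (j : Fin d) × Fin ((mv j : ℕ)) := ⟨x.1, ⟨(x.2 : ℕ), by omega⟩⟩ with hp
    set q : (j : Fin d) × Fin ((mv j : ℕ)) := ⟨y.1, ⟨(y.2 : ℕ), by omega⟩⟩ with hq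
    have hpq : p ≠ q := by
      intro hpq
      rw [hp, hq] at hpq
      exact hj (congrArg Sigma.fst hpq)
    have hrows_eq : M p = M q := by
      funext s
      show C x.1 (Fin.castLE _ ⟨(x.2 : ℕ), _⟩) s = C y.1 (Fin.castLE _ ⟨(y.2 : ℕ), _⟩) s
      have h1 : (Fin.castLE (Fin.is_le (mv x.1)) (⟨(x.2 : ℕ), by omega⟩ : Fin ((mv x.1 : ℕ))))
          = Fin.castLE hℓm x.2 := by apply Fin.ext; simp
      have h2 : (Fin.castLE (Fin.is_le (mv y.1)) (⟨(y.2 : ℕ), by omega⟩ : Fin ((mv y.1 : ℕ))))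
          = Fin.castLE hℓm y.2 := by apply Fin.ext; simp
      rw [h1, h2, hCxy]
    have := rank_lt_of_rows_eq M hpq hrows_eq
    rw [hrank, hcardS] at this
    exact lt_irrefl _ this
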